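/- Let ω ∈ ℤ₂ be the root of x² - x + 2 = 0 with v₂(ω) = 1, and set ω̄ = 1 - ω. Suppose t is an integer divisible by 8. Then there exists Ω_t ∈ ℤ₂ such that for every integer k ≥ 1, v₂(ω̄^(2k-1) + (1+t)·(1-2ω)) = 3 + v₂(k - Ω_t), where k is regarded as an element of ℤ₂. (Equivalently, since ω - ω̄ = -(1-2ω) is a 2-adic unit, v₂(ω̄^(2k-1)/(ω - ω̄) - 1 - t) = 3 + v₂(k - Ω_t).) -/

import Mathlib

open PadicInt Filter Topology



private lemma cast_two : ((2:ℕ):ℤ_[2]) = 2 := by norm_cast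

private lemma dvd_of_toZMod_eq_zero (y : ℤ_[2]) (hy : PadicInt.toZMod y = 0) :
    (2:ℤ_[2]) ∣ y := by
  have h : y ∈ RingHom.ker (PadicInt.toZMod (p := 2)) := hy
  rw [PadicInt.ker_toZMod, PadicInt.maximalIdeal_eq_span_p,
    Ideal.mem_span_singleton, cast_two] at h
  exact h

private lemma two_dvd_or (x : ℤ_[2]) : (2:ℤ_[2]) ∣ x ∨ (2:ℤ_[2]) ∣ (x - 1) := by
  have h : PadicInt.toZMod x = 0 ∨ PadicInt.toZMod x = 1 := by
    generalize PadicInt.toZMod x = r; revert r; decide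
  rcases h with h | h
  · exact Or.inl (dvd_of_toZMod_eq_zero x h)
  · refine Or.inr (dvd_of_toZMod_eq_zero _ ?_)
    simp [map_sub, h]

private lemma norm_one_iff (x : ℤ_[2]) : ‖x‖ = 1 ↔ ¬ (2:ℤ_[2]) ∣ x := by
  rw [← cast_two, ← PadicInt.norm_lt_one_iff_dvd, not_lt]
  constructor
  · intro h; rw [h]
  · intro h; exact le_antisymm (PadicInt.norm_le_one x) (by exact_mod_cast h)

private lemma norm_two : ‖(2:ℤ_[2])‖ = 2⁻¹ := by
  have := PadicInt.norm_p (p := 2)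
  rw [cast_two] at this
  simpa using this

private lemma odd_add_odd {x y : ℤ_[2]} (hx : ‖x‖ = 1) (hy : ‖y‖ = 1) :
    (2:ℤ_[2]) ∣ (x + y) := by
  rcases two_dvd_or x with h | h
  · exact absurd h ((norm_one_iff x).1 hx)
  rcases two_dvd_or y with h' | h'
  · exact absurd h' ((norm_one_iff y).1 hy)
  obtain ⟨c, hc⟩ := h; obtain ⟨c', hc'⟩ := h'
  exact ⟨c + c' + 1, by linear_combination hc + hc'⟩

/-- if two elements of ℤ₂ have the same norm, their sum has norm at most half. -/
private lemma norm_add_le_half {x y : ℤ_[2]} (h : ‖x‖ = ‖y‖) :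
    ‖x + y‖ ≤ 2⁻¹ * ‖x‖ := by
  rcases eq_or_ne x 0 with rfl | hx
  · have : y = 0 := by rwa [norm_zero, eq_comm, norm_eq_zero] at h
    simp [this]
  have hy : y ≠ 0 := by
    intro h0; rw [h0, norm_zero, norm_eq_zero] at h; exact hx h
  have hvxy : x.valuation = y.valuation := by
    rw [PadicInt.norm_eq_zpow_neg_valuation hx, PadicInt.norm_eq_zpow_neg_valuation hy] at h
    have := zpow_right_injective₀ (by norm_num : (0:ℝ) < ((2:ℕ):ℝ))
      (by norm_num : ((2:ℕ):ℝ) ≠ 1) h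
    have h' : (x.valuation : ℤ) = y.valuation := neg_injective this
    exact_mod_cast h'
  have hxs := PadicInt.unitCoeff_spec hx
  have hys := PadicInt.unitCoeff_spec hy
  rw [← hvxy] at hys
  rw [cast_two] at hxs hys
  generalize hn : x.valuation = n at hxs hys
  obtain ⟨c, hc⟩ := odd_add_odd (PadicInt.norm_units (PadicInt.unitCoeff hx))
    (PadicInt.norm_units (PadicInt.unitCoeff hy))
  have hsum : x + y = 2 * c * (2:ℤ_[2]) ^ n := by
    rw [hxs, hys, ← hc]; ring
  have hxnorm : ‖x‖ = ‖(2:ℤ_[2]) ^ n‖ := by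
    conv_lhs => rw [hxs]
    rw [norm_mul, PadicInt.norm_units, one_mul]
  rw [hsum, norm_mul, norm_mul, ← hxnorm, norm_two]
  have := PadicInt.norm_le_one c
  have h0 : (0:ℝ) ≤ ‖x‖ := norm_nonneg x
  nlinarith

private lemma odd_cast_norm {j : ℕ} (hj : Odd j) : ‖(j:ℤ_[2])‖ = 1 := by
  rw [norm_one_iff]
  obtain ⟨m, rfl⟩ := hj
  push_cast
  intro ⟨c, hc⟩
  have h1 : (2:ℤ_[2]) ∣ 1 := ⟨c - m, by linear_combination hc⟩
  have h2 : ((2:ℕ):ℤ_[2]) ∣ 1 := by rwa [cast_two]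
  have := (PadicInt.norm_lt_one_iff_dvd (1:ℤ_[2])).2 h2
  simp at this

private lemma norm_pow_sub_one_odd {b : ℤ_[2]} (hb : (2:ℤ_[2]) ∣ (b - 1)) {j : ℕ}
    (hj : Odd j) : ‖b ^ j - 1‖ = ‖b - 1‖ := by
  have hgeom := geom_sum_mul b j
  have hS : ‖∑ i ∈ Finset.range j, b ^ i‖ = 1 := by
    rw [norm_one_iff]
    have hdvd : (2:ℤ_[2]) ∣ (∑ i ∈ Finset.range j, b ^ i) - (j:ℤ_[2]) := by
      have : (∑ i ∈ Finset.range j, b ^ i) - (j:ℤ_[2])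
          = ∑ i ∈ Finset.range j, (b ^ i - 1) := by
        rw [Finset.sum_sub_distrib]
        simp
      rw [this]
      refine Finset.dvd_sum fun i _ => hb.trans ?_
      simpa using sub_dvd_pow_sub_pow b 1 i
    intro hS2
    have : (2:ℤ_[2]) ∣ (j:ℤ_[2]) := (dvd_sub_right hS2).mp (by simpa using hdvd)
    have hj1 := odd_cast_norm hj
    rw [norm_one_iff] at hj1
    exact hj1 this
  rw [← hgeom, norm_mul, hS, one_mul]

private lemma norm_sq_sub_one {b : ℤ_[2]} (hb : ‖b - 1‖ ≤ 4⁻¹) :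
    ‖b ^ 2 - 1‖ = 2⁻¹ * ‖b - 1‖ := by
  have h1 : b ^ 2 - 1 = (2 + (b - 1)) * (b - 1) := by ring
  have h2 : ‖(2:ℤ_[2]) + (b - 1)‖ = 2⁻¹ := by
    rw [PadicInt.norm_add_eq_max_of_ne (by rw [norm_two]; intro h; rw [← h] at hb; norm_num at hb)]
    rw [norm_two]
    refine max_eq_left (by linarith)
  rw [h1, norm_mul, h2]

private lemma norm_pow_sub_one : ∀ j : ℕ, ∀ b : ℤ_[2], ‖b - 1‖ ≤ 4⁻¹ →
    ‖b ^ j - 1‖ = ‖b - 1‖ * ‖(j:ℤ_[2])‖ := by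
  intro j
  induction j using Nat.strong_induction_on with
  | _ j ih =>
    intro b hb
    rcases Nat.even_or_odd j with he | ho
    · rcases Nat.eq_zero_or_pos j with rfl | hj0
      · simp
      obtain ⟨m, rfl⟩ := he
      have hm : m < m + m := by omega
      have hb2 : ‖b ^ 2 - 1‖ ≤ 4⁻¹ := by
        rw [norm_sq_sub_one hb]
        have := norm_nonneg (b - 1)
        linarith
      have key := ih m hm (b ^ 2) hb2
      rw [← pow_mul] at key
      have h2m : (m + m) = 2 * m := by ring
      rw [h2m] at *
      rw [key, norm_sq_sub_one hb]
      have : ((2 * m : ℕ) : ℤ_[2]) = 2 * (m:ℤ_[2]) := by push_cast; ring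
      rw [this, norm_mul, norm_two]
      ring
    · have hdvd : (2:ℤ_[2]) ∣ (b - 1) := by
        have h := (PadicInt.norm_lt_one_iff_dvd (b-1)).1 (by
          calc ‖b-1‖ ≤ 4⁻¹ := hb
            _ < 1 := by norm_num)
        rwa [cast_two] at h
      rw [norm_pow_sub_one_odd hdvd ho, odd_cast_norm ho, mul_one]

private lemma omega_facts (ω : ℤ_[2]) (hroot : ω ^ 2 - ω + 2 = 0) (hval : ω.valuation = 1) :
    ‖ω‖ = 2⁻¹ ∧ ‖2 + ω‖ = 8⁻¹ := by
  have hω0 : ω ≠ 0 := by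
    intro h; rw [h, PadicInt.valuation_zero] at hval; norm_num at hval
  have hnω : ‖ω‖ = 2⁻¹ := by
    rw [PadicInt.norm_eq_zpow_neg_valuation hω0, hval]
    norm_num
  refine ⟨hnω, ?_⟩
  have hdvd : (2:ℤ_[2]) ∣ ω := by
    have h := (PadicInt.norm_lt_one_iff_dvd ω).1 (by rw [hnω]; norm_num)
    rwa [cast_two] at h
  obtain ⟨u, hu⟩ := hdvd
  have h2ne : (2:ℤ_[2]) ≠ 0 := by
    intro h
    have h2 := norm_two
    rw [h, norm_zero] at h2
    norm_num at h2
  have hu2 : 2 * u ^ 2 - u + 1 = 0 := by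
    apply mul_left_cancel₀ h2ne
    rw [mul_zero]
    linear_combination hroot - (2*u - 1 + ω) * hu
  have key : u = 1 + 2 * u ^ 2 := by linear_combination -hu2
  have h8 : 2 + ω = 8 * (1 + 2 * (u ^ 2 + u ^ 4)) := by
    linear_combination hu + (8*u^2 + 4*u + 6) * key
  have hunit : ‖1 + 2 * (u ^ 2 + u ^ 4)‖ = 1 := by
    rw [norm_one_iff]
    intro ⟨c, hc⟩
    have h1 : (2:ℤ_[2]) ∣ 1 := ⟨c - (u^2 + u^4), by linear_combination hc⟩
    have h1' : ((2:ℕ):ℤ_[2]) ∣ 1 := by rwa [cast_two]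
    have := (PadicInt.norm_lt_one_iff_dvd (1:ℤ_[2])).2 h1'
    simp at this
  have h8n : ‖(8:ℤ_[2])‖ = 8⁻¹ := by
    have : (8:ℤ_[2]) = 2 * (2 * 2) := by norm_num
    rw [this, norm_mul, norm_mul, norm_two]
    norm_num
  rw [h8, norm_mul, h8n, hunit, mul_one]

private lemma cast_add_mul_omega_eq_zero (ω : ℤ_[2]) (hroot : ω ^ 2 - ω + 2 = 0)
    (A B : ℤ) (h : (A:ℤ_[2]) + (B:ℤ_[2]) * ω = 0) : A = 0 ∧ B = 0 := by
  have hAB : ((A^2 + A*B + 2*B^2 : ℤ) : ℤ_[2]) = 0 := by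
    push_cast
    linear_combination ((A:ℤ_[2]) + (B:ℤ_[2]) - (B:ℤ_[2])*ω) * h + (B:ℤ_[2])^2 * hroot
  have hZ : A^2 + A*B + 2*B^2 = 0 := by exact_mod_cast hAB
  have hB : B = 0 := by nlinarith [sq_nonneg (2*A + B), sq_nonneg B]
  subst hB
  constructor
  · nlinarith [sq_nonneg A]
  · rfl

private def AB : ℕ → ℤ × ℤ
  | 0 => (1, 0)
  | n+1 => (2 * (AB n).2 - (AB n).1, -((AB n).1 + 2 * (AB n).2))

private lemma AB_pow (ω : ℤ_[2]) (hroot : ω ^ 2 - ω + 2 = 0) :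
    ∀ j, (-1 - ω) ^ j = ((AB j).1 : ℤ_[2]) + ((AB j).2 : ℤ_[2]) * ω := by
  intro j
  induction j with
  | zero => simp [AB]
  | succ n ih =>
    rw [pow_succ, ih]
    show _ = ((2 * (AB n).2 - (AB n).1 : ℤ) : ℤ_[2]) + ((-((AB n).1 + 2 * (AB n).2) : ℤ) : ℤ_[2]) * ω
    push_cast
    linear_combination -((((AB n).2 : ℤ_[2]))) * hroot
    
private lemma AB_norm : ∀ j, (AB j).1^2 + (AB j).1 * (AB j).2 + 2*(AB j).2^2 = 4^j := by
  intro j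
  induction j with
  | zero => simp [AB]
  | succ n ih =>
    show (2 * (AB n).2 - (AB n).1)^2 + (2 * (AB n).2 - (AB n).1) * (-((AB n).1 + 2 * (AB n).2))
      + 2*(-((AB n).1 + 2 * (AB n).2))^2 = 4^(n+1)
    rw [pow_succ]
    linear_combination 4 * ih

private lemma pow_ne (ω : ℤ_[2]) (hroot : ω ^ 2 - ω + 2 = 0) (t : ℤ) (k : ℕ) :
    (-1 - ω) ^ k ≠ ((1 + t : ℤ) : ℤ_[2]) * (3 + ω) := by
  intro h
  rw [AB_pow ω hroot k] at h
  have h0 : (((AB k).1 - 3*(1+t) : ℤ) : ℤ_[2]) + (((AB k).2 - (1+t) : ℤ) : ℤ_[2]) * ω = 0 := by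
    push_cast
    push_cast at h
    linear_combination h
  obtain ⟨hA, hB⟩ := cast_add_mul_omega_eq_zero ω hroot _ _ h0
  have hA' : (AB k).1 = 3*(1+t) := by linarith
  have hB' : (AB k).2 = 1+t := by linarith
  have hnorm := AB_norm k
  rw [hA', hB'] at hnorm
  have h7 : (7:ℤ) ∣ 4 ^ k := ⟨2*(1+t)^2, by linarith⟩
  have hp7 : Prime (7:ℤ) := by norm_num
  have h74 : (7:ℤ) ∣ 4 := hp7.dvd_of_dvd_pow h7
  norm_num at h74

private lemma norm_pow2 (a : ℤ_[2]) (n : ℕ) : ‖a ^ n‖ = ‖a‖ ^ n := by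
  induction n with
  | zero => simp
  | succ m ih => rw [pow_succ, pow_succ, norm_mul, ih]

private lemma pow23 (n : ℕ) : (2:ℝ) ^ (-((n:ℤ)+3)) = 8⁻¹ * 2⁻¹ ^ n := by
  rw [zpow_neg, zpow_add₀ (by norm_num : (2:ℝ) ≠ 0), zpow_natCast, _root_.mul_inv, ← inv_pow]
  norm_num [mul_comm]

private lemma main_construction (a d : ℤ_[2])
    (hpow : ∀ j : ℕ, ‖a ^ j - 1‖ = 8⁻¹ * ‖(j:ℤ_[2])‖)
    (hna : ‖a‖ = 1) (hd : ‖d - 1‖ ≤ 8⁻¹) (hne : ∀ k : ℕ, a ^ k ≠ d) :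
    ∃ Ω : ℤ_[2], ∀ k : ℕ, ((k:ℤ_[2]) - Ω ≠ 0) ∧ ‖a ^ k - d‖ = 8⁻¹ * ‖(k:ℤ_[2]) - Ω‖ := by
  have hnormcast : ∀ n : ℕ, ‖((2^n : ℕ) : ℤ_[2])‖ = 2⁻¹ ^ n := by
    intro n
    have : ((2^n : ℕ) : ℤ_[2]) = 2 ^ n := by push_cast; ring
    rw [this, norm_pow2, norm_two]
  -- difference of powers
  have hdiff0 : ∀ m n : ℕ, n ≤ m → ‖a ^ m - a ^ n‖ = 8⁻¹ * ‖(m:ℤ_[2]) - (n:ℤ_[2])‖ := by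
    intro m n hnm
    have h1 : a ^ m - a ^ n = a ^ n * (a ^ (m - n) - 1) := by
      rw [mul_sub, ← pow_add, Nat.add_sub_cancel' hnm, mul_one]
    have h2 : ((m - n : ℕ) : ℤ_[2]) = (m:ℤ_[2]) - (n:ℤ_[2]) := by
      push_cast [Nat.cast_sub hnm]; ring
    rw [h1, norm_mul, norm_pow2, hna, one_pow, one_mul, hpow, h2]
  have hdiff : ∀ m n : ℕ, ‖a ^ m - a ^ n‖ = 8⁻¹ * ‖(m:ℤ_[2]) - (n:ℤ_[2])‖ := by
    intro m n
    rcases le_total n m with h | h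
    · exact hdiff0 m n h
    · rw [norm_sub_rev, norm_sub_rev ((m:ℤ_[2])), hdiff0 n m h]
  -- the invariant
  have base : ‖a ^ 0 - d‖ ≤ 8⁻¹ * 2⁻¹ ^ (0:ℕ) := by
    have h0 : a ^ 0 - d = -(d - 1) := by ring
    rw [h0, norm_neg]; simpa using hd
  have step : ∀ n k, ‖a ^ k - d‖ ≤ 8⁻¹ * 2⁻¹ ^ n →
      ∃ k' : ℕ, ‖a ^ k' - d‖ ≤ 8⁻¹ * 2⁻¹ ^ (n+1) ∧ ‖((k':ℕ):ℤ_[2]) - ((k:ℕ):ℤ_[2])‖ ≤ 2⁻¹ ^ n := by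
    intro n k hk
    by_cases h : ‖a ^ k - d‖ ≤ 8⁻¹ * 2⁻¹ ^ (n+1)
    · exact ⟨k, h, by simp⟩
    · refine ⟨k + 2^n, ?_, ?_⟩
      · have hxnorm : ‖a ^ k * (a ^ (2^n) - 1)‖ = 8⁻¹ * 2⁻¹ ^ n := by
          rw [norm_mul, norm_pow2, hna, one_pow, one_mul, hpow, hnormcast]
        have hynz : a ^ k - d ≠ 0 := sub_ne_zero.mpr (hne k)
        have hyval : ‖a ^ k - d‖ = ((2:ℕ):ℝ) ^ (-((a ^ k - d).valuation : ℤ)) :=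
          PadicInt.norm_eq_zpow_neg_valuation hynz
        have hyeq : ‖a ^ k - d‖ = 8⁻¹ * 2⁻¹ ^ n := by
          by_contra hne'
          have hlt : ‖a ^ k - d‖ < 8⁻¹ * 2⁻¹ ^ n := lt_of_le_of_ne hk hne'
          have h2 : (1:ℝ) < 2 := one_lt_two
          have e1 : ((2:ℕ):ℝ) = (2:ℝ) := by norm_num
          rw [hyval, e1, ← pow23 n] at hlt
          have hv1 : -((a ^ k - d).valuation : ℤ) < -((n:ℤ)+3) :=
            (zpow_lt_zpow_iff_right₀ h2).1 hlt
          have hv2 : -((a ^ k - d).valuation : ℤ) ≤ -(((n+1:ℕ):ℤ)+3) := by push_cast; omega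
          have hcon : ‖a ^ k - d‖ ≤ 8⁻¹ * 2⁻¹ ^ (n+1) := by
            rw [hyval, e1, ← pow23 (n+1)]
            exact (zpow_le_zpow_iff_right₀ h2).2 hv2
          exact h hcon
        have hsplit : a ^ (k + 2^n) - d = a ^ k * (a ^ (2^n) - 1) + (a ^ k - d) := by
          rw [pow_add]; ring
        rw [hsplit]
        have := norm_add_le_half (x := a ^ k * (a ^ (2^n) - 1)) (y := a ^ k - d)
          (by rw [hxnorm, hyeq])
        rw [hxnorm] at this
        calc ‖_ + _‖ ≤ 2⁻¹ * (8⁻¹ * 2⁻¹ ^ n) := this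
          _ = 8⁻¹ * 2⁻¹ ^ (n+1) := by ring
      · have : ((k + 2^n : ℕ) : ℤ_[2]) - ((k:ℕ):ℤ_[2]) = ((2^n : ℕ) : ℤ_[2]) := by
          push_cast; ring
        rw [this, hnormcast]
  -- build the sequence
  let S : ∀ n : ℕ, {k : ℕ // ‖a ^ k - d‖ ≤ 8⁻¹ * 2⁻¹ ^ n} := fun n => Nat.rec ⟨0, base⟩
    (fun n ih => ⟨Classical.choose (step n ih.1 ih.2),
      (Classical.choose_spec (step n ih.1 ih.2)).1⟩) n
  set x : ℕ → ℤ_[2] := fun n => ((S n).1 : ℤ_[2]) with hx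
  have hSstep : ∀ n, ‖x (n+1) - x n‖ ≤ 2⁻¹ ^ n := fun n =>
    (Classical.choose_spec (step n (S n).1 (S n).2)).2
  have hSP : ∀ n, ‖a ^ (S n).1 - d‖ ≤ 8⁻¹ * 2⁻¹ ^ n := fun n => (S n).2
  -- Cauchy
  have hcauchy : CauchySeq x := by
    apply cauchySeq_of_le_geometric 2⁻¹ 1 (by norm_num)
    intro n
    rw [dist_eq_norm, norm_sub_rev, one_mul]
    exact hSstep n
  obtain ⟨Ω, hΩ⟩ := cauchySeq_tendsto_of_complete hcauchy
  have hxm : ∀ n j, ‖x n - x (n+j)‖ ≤ 2⁻¹ ^ n := by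
    intro n j
    induction j with
    | zero => simp
    | succ m ih =>
      have hsplit : x n - x (n+(m+1)) = (x n - x (n+m)) + (x (n+m) - x (n+m+1)) := by abel
      have h1 : ‖x (n+m) - x (n+m+1)‖ ≤ 2⁻¹ ^ n := by
        rw [norm_sub_rev]
        calc ‖x (n+m+1) - x (n+m)‖ ≤ 2⁻¹ ^ (n+m) := hSstep (n+m)
          _ ≤ 2⁻¹ ^ n := pow_le_pow_of_le_one (by norm_num) (by norm_num) (by omega)
      calc ‖x n - x (n+(m+1))‖ ≤ max ‖x n - x (n+m)‖ ‖x (n+m) - x (n+m+1)‖ := by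
            rw [hsplit]; exact PadicInt.nonarchimedean _ _
        _ ≤ 2⁻¹ ^ n := max_le ih h1
  have hclose : ∀ n, ‖x n - Ω‖ ≤ 2⁻¹ ^ n := by
    intro n
    have htend : Tendsto (fun m => ‖x n - x m‖) atTop (𝓝 ‖x n - Ω‖) :=
      ((tendsto_const_nhds.sub hΩ).norm)
    refine le_of_tendsto htend ?_
    filter_upwards [Filter.eventually_ge_atTop n] with m hm
    obtain ⟨j, rfl⟩ := Nat.exists_eq_add_of_le hm
    exact hxm n j
  refine ⟨Ω, fun k => ?_⟩
  have hkO : (k:ℤ_[2]) - Ω ≠ 0 := by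
    intro hk0
    have hb : ∀ n : ℕ, ‖a ^ k - d‖ ≤ 8⁻¹ * 2⁻¹ ^ n := by
      intro n
      have h1 : ‖a ^ k - a ^ (S n).1‖ ≤ 8⁻¹ * 2⁻¹ ^ n := by
        rw [hdiff k (S n).1]
        have : (k:ℤ_[2]) - ((S n).1 : ℤ_[2]) = -(x n - Ω) + ((k:ℤ_[2]) - Ω) := by
          rw [hx]; ring
        rw [this, hk0, add_zero, norm_neg]
        have := hclose n
        have h8 : (0:ℝ) < 8⁻¹ := by norm_num
        nlinarith [norm_nonneg (x n - Ω)]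
      have hsplit : a ^ k - d = (a ^ k - a ^ (S n).1) + (a ^ (S n).1 - d) := by ring
      calc ‖a ^ k - d‖ ≤ max ‖a ^ k - a ^ (S n).1‖ ‖a ^ (S n).1 - d‖ := by
            rw [hsplit]; exact PadicInt.nonarchimedean _ _
        _ ≤ 8⁻¹ * 2⁻¹ ^ n := max_le h1 (hSP n)
    have hpos : (0:ℝ) < ‖a ^ k - d‖ := by
      rw [norm_pos_iff]
      exact sub_ne_zero.mpr (hne k)
    obtain ⟨n, hn⟩ := exists_pow_lt_of_lt_one (by linarith : (0:ℝ) < 8 * ‖a ^ k - d‖)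
      (by norm_num : (2⁻¹:ℝ) < 1)
    have := hb n
    linarith
  refine ⟨hkO, ?_⟩
  have hβ : (0:ℝ) < ‖(k:ℤ_[2]) - Ω‖ := norm_pos_iff.mpr hkO
  obtain ⟨n, hn⟩ := exists_pow_lt_of_lt_one hβ (by norm_num : (2⁻¹:ℝ) < 1)
  have h1 : ‖(k:ℤ_[2]) - x n‖ = ‖(k:ℤ_[2]) - Ω‖ := by
    have hsplit : (k:ℤ_[2]) - x n = ((k:ℤ_[2]) - Ω) + (Ω - x n) := by ring
    have hsm : ‖Ω - x n‖ < ‖(k:ℤ_[2]) - Ω‖ := by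
      rw [norm_sub_rev]
      calc ‖x n - Ω‖ ≤ 2⁻¹ ^ n := hclose n
        _ < _ := hn
    rw [hsplit, PadicInt.norm_add_eq_max_of_ne (by intro hcon; rw [hcon] at hsm; linarith)]
    exact max_eq_left hsm.le
  have h2 : ‖a ^ k - a ^ (S n).1‖ = 8⁻¹ * ‖(k:ℤ_[2]) - Ω‖ := by
    have e : (((S n).1:ℕ):ℤ_[2]) = x n := rfl
    rw [hdiff k (S n).1, e, h1]
  have h3 : ‖a ^ (S n).1 - d‖ < 8⁻¹ * ‖(k:ℤ_[2]) - Ω‖ := by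
    calc ‖a ^ (S n).1 - d‖ ≤ 8⁻¹ * 2⁻¹ ^ n := hSP n
      _ < 8⁻¹ * ‖(k:ℤ_[2]) - Ω‖ := by nlinarith
  have hsplit : a ^ k - d = (a ^ k - a ^ (S n).1) + (a ^ (S n).1 - d) := by ring
  rw [hsplit, PadicInt.norm_add_eq_max_of_ne (by rw [h2]; intro hcon; rw [← hcon] at h3; linarith),
    h2, max_eq_left h3.le]

/-- Let `ω ∈ ℤ₂` be the root of `x² - x + 2` with `v₂(ω) = 1` and `ω̄ = 1 - ω`.
If `8 ∣ t`, there is `Ω_t ∈ ℤ₂` such that for every `k ≥ 1`,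
`v₂(ω̄^(2k-1) + (1+t)(1-2ω)) = 3 + v₂(k - Ω_t)`. -/
theorem exists_Omega_t (ω : ℤ_[2]) (hroot : ω ^ 2 - ω + 2 = 0) (hval : ω.valuation = 1)
    (t : ℤ) (ht : (8 : ℤ) ∣ t) :
    ∃ Ωt : ℤ_[2], ∀ k : ℕ, 1 ≤ k →
      ((1 - ω) ^ (2 * k - 1) + ((1 + t : ℤ) : ℤ_[2]) * (1 - 2 * ω)).valuation =
        3 + ((k : ℤ_[2]) - Ωt).valuation := by
  obtain ⟨hnω, h2ω⟩ := omega_facts ω hroot hval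
  set a : ℤ_[2] := -1 - ω with ha_def
  set d : ℤ_[2] := ((1 + t : ℤ) : ℤ_[2]) * (3 + ω) with hd_def
  have ha1 : ‖a - 1‖ = 8⁻¹ := by
    have : a - 1 = -(2 + ω) := by rw [ha_def]; ring
    rw [this, norm_neg, h2ω]
  have ha : ‖a‖ = 1 := by
    have h0 : a = 1 + (a - 1) := by ring
    rw [h0, PadicInt.norm_add_eq_max_of_ne (by rw [ha1]; norm_num)]
    rw [ha1]; norm_num
  have hpow : ∀ j : ℕ, ‖a ^ j - 1‖ = 8⁻¹ * ‖(j:ℤ_[2])‖ := by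
    intro j
    rw [norm_pow_sub_one j a (by rw [ha1]; norm_num), ha1]
  have h8n : ‖(8:ℤ_[2])‖ = 8⁻¹ := by
    have : (8:ℤ_[2]) = 2 * (2 * 2) := by norm_num
    rw [this, norm_mul, norm_mul, norm_two]
    norm_num
  have hd : ‖d - 1‖ ≤ 8⁻¹ := by
    obtain ⟨s, rfl⟩ := ht
    have he : d - 1 = (2 + ω) + 8 * ((s:ℤ_[2]) * (3 + ω)) := by
      rw [hd_def]; push_cast; ring
    rw [he]
    refine le_trans (PadicInt.nonarchimedean _ _) (max_le (le_of_eq h2ω) ?_)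
    rw [norm_mul, h8n]
    have h1 := PadicInt.norm_le_one ((s:ℤ_[2]) * (3 + ω))
    nlinarith [norm_nonneg ((s:ℤ_[2]) * (3 + ω))]
  have hne' : ∀ k : ℕ, a ^ k ≠ d := fun k => pow_ne ω hroot t k
  obtain ⟨Ω, hΩ⟩ := main_construction a d hpow ha hd hne'
  refine ⟨Ω, fun k hk => ?_⟩
  obtain ⟨hk0, hknorm⟩ := hΩ k
  set E : ℤ_[2] := (1 - ω) ^ (2 * k - 1) + ((1 + t : ℤ) : ℤ_[2]) * (1 - 2 * ω) with hE_def
  have hfac : E * (1 - ω) = a ^ k - d := by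
    have h1 : (1 - ω) ^ (2*k-1) * (1 - ω) = (1 - ω) ^ (2*k) := by
      rw [← pow_succ, Nat.sub_add_cancel (by omega)]
    have h2 : (1 - ω) ^ (2*k) = a ^ k := by
      rw [pow_mul]
      congr 1
      rw [ha_def]
      linear_combination hroot
    calc E * (1 - ω) = (1 - ω) ^ (2*k-1) * (1 - ω)
          + ((1 + t : ℤ) : ℤ_[2]) * ((1 - 2*ω) * (1 - ω)) := by rw [hE_def]; ring
      _ = a ^ k - d := by
          rw [h1, h2, hd_def]
          linear_combination (2*((1 + t : ℤ) : ℤ_[2])) * hroot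
  have hE0 : E ≠ 0 := by
    intro h0
    apply hne' k
    have h1 := hfac
    rw [h0, zero_mul] at h1
    linear_combination -h1
  have h1ω : ‖1 - ω‖ = 1 := by
    have h0 : (1:ℤ_[2]) - ω = 1 + (-ω) := by ring
    rw [h0, PadicInt.norm_add_eq_max_of_ne (by rw [norm_neg, hnω, norm_one]; norm_num)]
    rw [norm_neg, hnω, norm_one]; norm_num
  have hnormE : ‖E‖ = 8⁻¹ * ‖(k:ℤ_[2]) - Ω‖ := by
    calc ‖E‖ = ‖E‖ * ‖1 - ω‖ := by rw [h1ω, mul_one]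
      _ = ‖E * (1 - ω)‖ := (norm_mul _ _).symm
      _ = ‖a ^ k - d‖ := by rw [hfac]
      _ = 8⁻¹ * ‖(k:ℤ_[2]) - Ω‖ := hknorm
  have hv1 := PadicInt.norm_eq_zpow_neg_valuation hE0
  have hv2 := PadicInt.norm_eq_zpow_neg_valuation hk0
  have e1 : ((2:ℕ):ℝ) = 2 := by norm_num
  rw [hv1, hv2, e1] at hnormE
  have e2 : (8⁻¹:ℝ) * (2:ℝ) ^ (-(((k:ℤ_[2]) - Ω).valuation : ℤ))
      = (2:ℝ) ^ (-(3 + (((k:ℤ_[2]) - Ω).valuation : ℤ))) := by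
    rw [neg_add, zpow_add₀ (by norm_num : (2:ℝ) ≠ 0)]
    norm_num
  rw [e2] at hnormE
  have := zpow_right_injective₀ (by norm_num : (0:ℝ) < 2) (by norm_num : (2:ℝ) ≠ 1) hnormE
  replace this : -(E.valuation : ℤ) = -(3 + (((k:ℤ_[2]) - Ω).valuation : ℤ)) := this
  omega
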